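/- Let ρ ∈ [0,1), J = 2·⌈1/(1-ρ)⌉, and α_n = 1 - 2/((1-ρ)(n+J)) for all n. For the SAM iteration x_0 = x, x_{n+1} = (1-α_n)f(x_n) + α_n T(x_n) in a W-hyperbolic space, with p a fixed point of T and M ≥ max{d(x,p), d(p,f(p))/(1-ρ)}, it holds for all n that d(x_{n+1}, x_n) ≤ 2MJ/((1-ρ)(n+J)). -/

import Mathlib

lemma key_ineq (a s Jr M : ℝ) (ha : 0 < a) (hJ : 2 ≤ Jr) (hJs : Jr ≤ s) (hM : 0 < M) :
    (1 - 2/(s+1)) * (2*M*Jr/(a*s)) + (2/(a*s) - 2/(a*(s+1))) * (2*M)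
      ≤ 2*M*Jr/(a*(s+1)) := by
  have hs0 : 0 < s := by nlinarith
  have hs1 : (0:ℝ) < s + 1 := by linarith
  have hane : a ≠ 0 := ne_of_gt ha
  rw [← sub_nonneg]
  have heq : 2*M*Jr/(a*(s+1)) -
      ((1 - 2/(s+1)) * (2*M*Jr/(a*s)) + (2/(a*s) - 2/(a*(s+1))) * (2*M))
      = (2*M*(Jr - 2)) / (a*s*(s+1)) := by
    field_simp
    ring
  rw [heq]
  exact div_nonneg (by nlinarith) (by positivity)

set_option maxHeartbeats 1000000 in
theorem stmt7 {X : Type*} [MetricSpace X] (W : X → X → ℝ → X)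
    (W1 : ∀ (x y z : X), ∀ l ∈ Set.Icc (0:ℝ) 1,
      dist z (W x y l) ≤ (1 - l) * dist z x + l * dist z y)
    (W2 : ∀ (x y : X), ∀ l ∈ Set.Icc (0:ℝ) 1, ∀ m ∈ Set.Icc (0:ℝ) 1,
      dist (W x y l) (W x y m) = |l - m| * dist x y)
    (W3 : ∀ (x y : X), ∀ l ∈ Set.Icc (0:ℝ) 1, W x y l = W y x (1 - l))
    (W4 : ∀ (x y z w : X), ∀ l ∈ Set.Icc (0:ℝ) 1,
      dist (W x z l) (W y w l) ≤ (1 - l) * dist x y + l * dist z w)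
    (C : Set X)
    (hC : ∀ x ∈ C, ∀ y ∈ C, ∀ l ∈ Set.Icc (0:ℝ) 1, W x y l ∈ C)
    (T f : X → X) (hTC : ∀ x ∈ C, T x ∈ C) (hfC : ∀ x ∈ C, f x ∈ C)
    (hT : ∀ x ∈ C, ∀ y ∈ C, dist (T x) (T y) ≤ dist x y)
    (ρ : ℝ) (hρ : ρ ∈ Set.Ico (0:ℝ) 1)
    (hf : ∀ x ∈ C, ∀ y ∈ C, dist (f x) (f y) ≤ ρ * dist x y)
    (α : ℕ → ℝ)
    (x₀ : X) (hx₀ : x₀ ∈ C) (x : ℕ → X) (hx0 : x 0 = x₀)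
    (J : ℕ) (hJ : J = 2 * ⌈1 / (1 - ρ)⌉₊)
    (hα : ∀ n, α n = 1 - 2 / ((1 - ρ) * (n + J)))
    (hxrec : ∀ n, x (n + 1) = W (f (x n)) (T (x n)) (α n))
    (p : X) (hp : p ∈ C) (hfix : T p = p)
    (M : ℝ) (hM : 0 < M) (hM1 : dist x₀ p ≤ M) (hM2 : dist p (f p) / (1 - ρ) ≤ M) :
    ∀ n, dist (x (n + 1)) (x n) ≤ (2 * M * J) / ((1 - ρ) * (n + J)) := by
  obtain ⟨hρ0, hρ1⟩ := hρ
  have ha : 0 < 1 - ρ := by linarith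
  have hceil : (1:ℕ) ≤ ⌈1 / (1 - ρ)⌉₊ :=
    Nat.one_le_ceil_iff.mpr (div_pos one_pos ha)
  have hJ2 : (2:ℝ) ≤ (J:ℝ) := by
    have : 2 ≤ J := by omega
    exact_mod_cast this
  have hle : 1 / (1 - ρ) ≤ (⌈1 / (1 - ρ)⌉₊ : ℝ) := Nat.le_ceil _
  have haJ : 2 ≤ (1 - ρ) * (J:ℝ) := by
    have hJr : (J:ℝ) = 2 * (⌈1/(1-ρ)⌉₊ : ℝ) := by rw [hJ]; push_cast; ring
    have h2 : (1:ℝ) ≤ (1-ρ) * (⌈1/(1-ρ)⌉₊:ℝ) := by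
      calc (1:ℝ) = (1-ρ) * (1/(1-ρ)) := by field_simp
        _ ≤ (1-ρ) * (⌈1/(1-ρ)⌉₊:ℝ) := by
            exact mul_le_mul_of_nonneg_left hle ha.le
    rw [hJr]; nlinarith
  have hD : ∀ n : ℕ, 2 ≤ (1 - ρ) * ((n:ℝ) + J) := by
    intro n
    have hn0 : (0:ℝ) ≤ n := Nat.cast_nonneg n
    nlinarith
  have hDpos : ∀ n : ℕ, 0 < (1 - ρ) * ((n:ℝ) + J) :=
    fun n => lt_of_lt_of_le (by norm_num) (hD n)
  have hα01 : ∀ n, α n ∈ Set.Icc (0:ℝ) 1 := by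
    intro n
    rw [hα]
    constructor
    · have h1 : 2 / ((1-ρ)*((n:ℝ)+J)) ≤ 1 := by
        rw [div_le_one (hDpos n)]; linarith [hD n]
      linarith
    · have h0 : 0 < 2 / ((1-ρ)*((n:ℝ)+J)) := by positivity
      linarith
  have hfp : dist p (f p) ≤ (1-ρ)*M := by
    rw [div_le_iff₀ ha] at hM2; linarith
  have hpfC : ∀ y ∈ C, dist y p ≤ M → dist p (f y) ≤ M := by
    intro y hy hyM
    have hpy : dist p y ≤ M := by rw [dist_comm]; exact hyM
    calc dist p (f y) ≤ dist p (f p) + dist (f p) (f y) := dist_triangle _ _ _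
      _ ≤ (1-ρ)*M + ρ * dist p y := add_le_add hfp (hf p hp y hy)
      _ ≤ (1-ρ)*M + ρ * M := by nlinarith
      _ = M := by ring
  have hpTC : ∀ y ∈ C, dist y p ≤ M → dist p (T y) ≤ M := by
    intro y hy hyM
    have hpy : dist p y ≤ M := by rw [dist_comm]; exact hyM
    calc dist p (T y) = dist (T p) (T y) := by rw [hfix]
      _ ≤ dist p y := hT p hp y hy
      _ ≤ M := hpy
  have hinv : ∀ n, x n ∈ C ∧ dist (x n) p ≤ M := by
    intro n
    induction n with
    | zero => rw [hx0]; exact ⟨hx₀, hM1⟩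
    | succ n ih =>
      obtain ⟨hxC, hxM⟩ := ih
      obtain ⟨h0, h1⟩ := hα01 n
      refine ⟨by rw [hxrec]; exact hC _ (hfC _ hxC) _ (hTC _ hxC) _ (hα01 n), ?_⟩
      rw [hxrec, dist_comm]
      calc dist p (W (f (x n)) (T (x n)) (α n))
          ≤ (1 - α n) * dist p (f (x n)) + α n * dist p (T (x n)) :=
            W1 _ _ _ _ (hα01 n)
        _ ≤ (1 - α n) * M + α n * M :=
            add_le_add (mul_le_mul_of_nonneg_left (hpfC _ hxC hxM) (by linarith))
              (mul_le_mul_of_nonneg_left (hpTC _ hxC hxM) h0)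
        _ = M := by ring
  have hpf : ∀ n, dist p (f (x n)) ≤ M := fun n => hpfC _ (hinv n).1 (hinv n).2
  have hpT : ∀ n, dist p (T (x n)) ≤ M := fun n => hpTC _ (hinv n).1 (hinv n).2
  have hfT : ∀ n, dist (f (x n)) (T (x n)) ≤ 2*M := by
    intro n
    calc dist (f (x n)) (T (x n)) ≤ dist (f (x n)) p + dist p (T (x n)) :=
          dist_triangle _ _ _
      _ ≤ M + M := add_le_add (by rw [dist_comm]; exact hpf n) (hpT n)
      _ = 2*M := by ring
  intro n
  induction n with
  | zero =>
    have h2M : dist (x 1) (x 0) ≤ 2*M := by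
      rw [hxrec 0, dist_comm]
      obtain ⟨h0, h1⟩ := hα01 0
      have hA : dist (x 0) (f (x 0)) ≤ 2*M := by
        calc dist (x 0) (f (x 0)) ≤ dist (x 0) p + dist p (f (x 0)) := dist_triangle _ _ _
          _ ≤ M + M := add_le_add (hinv 0).2 (hpf 0)
          _ = 2*M := by ring
      have hB : dist (x 0) (T (x 0)) ≤ 2*M := by
        calc dist (x 0) (T (x 0)) ≤ dist (x 0) p + dist p (T (x 0)) := dist_triangle _ _ _
          _ ≤ M + M := add_le_add (hinv 0).2 (hpT 0)
          _ = 2*M := by ring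
      calc dist (x 0) (W (f (x 0)) (T (x 0)) (α 0))
          ≤ (1 - α 0) * dist (x 0) (f (x 0)) + α 0 * dist (x 0) (T (x 0)) :=
            W1 _ _ _ _ (hα01 0)
        _ ≤ (1 - α 0) * (2*M) + α 0 * (2*M) :=
            add_le_add (mul_le_mul_of_nonneg_left hA (by linarith))
              (mul_le_mul_of_nonneg_left hB h0)
        _ = 2*M := by ring
    have hgoal : (2*M : ℝ) ≤ 2*M*(J:ℝ)/((1-ρ)*((0:ℕ)+J)) := by
      have hd := hDpos 0
      rw [le_div_iff₀ hd]
      have hJ0 : (0:ℝ) ≤ (J:ℝ) := by linarith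
      have hρJ : (0:ℝ) ≤ ρ * (J:ℝ) := mul_nonneg hρ0 hJ0
      have := mul_nonneg hM.le hρJ
      push_cast
      nlinarith [this]
    calc dist (x (0+1)) (x 0) ≤ 2*M := h2M
      _ ≤ 2*M*(J:ℝ)/((1-ρ)*((0:ℕ)+J)) := hgoal
  | succ n ih =>
    have hxCn := (hinv n).1
    have hxCn1 := (hinv (n+1)).1
    set a := 1 - ρ with hadef
    set s : ℝ := (n:ℝ) + J with hsdef
    have hs1 : ((n+1:ℕ):ℝ) + (J:ℝ) = s + 1 := by push_cast; ring
    have hd1 : dist (f (x (n+1))) (f (x n)) ≤ ρ * dist (x (n+1)) (x n) :=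
      hf _ hxCn1 _ hxCn
    have hd2 : dist (T (x (n+1))) (T (x n)) ≤ dist (x (n+1)) (x n) :=
      hT _ hxCn1 _ hxCn
    obtain ⟨h0, h1⟩ := hα01 (n+1)
    have htri : dist (x (n+1+1)) (x (n+1)) ≤
        ((1 - α (n+1)) * ρ + α (n+1)) * dist (x (n+1)) (x n)
          + |α (n+1) - α n| * (2*M) := by
      calc dist (x (n+1+1)) (x (n+1))
          ≤ dist (x (n+1+1)) (W (f (x n)) (T (x n)) (α (n+1)))
            + dist (W (f (x n)) (T (x n)) (α (n+1))) (x (n+1)) := dist_triangle _ _ _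
        _ ≤ ((1 - α (n+1)) * dist (f (x (n+1))) (f (x n))
              + α (n+1) * dist (T (x (n+1))) (T (x n)))
            + |α (n+1) - α n| * dist (f (x n)) (T (x n)) := by
            apply add_le_add
            · rw [hxrec (n+1)]
              exact W4 _ _ _ _ _ (hα01 (n+1))
            · rw [hxrec n]
              exact le_of_eq (W2 _ _ _ (hα01 (n+1)) _ (hα01 n))
        _ ≤ ((1 - α (n+1)) * (ρ * dist (x (n+1)) (x n))
              + α (n+1) * dist (x (n+1)) (x n))
            + |α (n+1) - α n| * (2*M) := by
            apply add_le_add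
            · exact add_le_add (mul_le_mul_of_nonneg_left hd1 (by linarith))
                (mul_le_mul_of_nonneg_left hd2 h0)
            · exact mul_le_mul_of_nonneg_left (hfT n) (abs_nonneg _)
        _ = ((1 - α (n+1)) * ρ + α (n+1)) * dist (x (n+1)) (x n)
            + |α (n+1) - α n| * (2*M) := by ring
    have hane : a ≠ 0 := ne_of_gt ha
    have hspos : (0:ℝ) < s := by
      have : (0:ℝ) ≤ (n:ℝ) := Nat.cast_nonneg n
      rw [hsdef]; linarith
    have hs1pos : (0:ℝ) < s + 1 := by linarith
    have hαdiff : |α (n+1) - α n| = 2/(a*s) - 2/(a*(s+1)) := by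
      rw [hα, hα, hs1]
      rw [abs_of_nonneg]
      · ring
      · have hle2 : 2/(a*(s+1)) ≤ 2/(a*s) := by
          apply div_le_div_of_nonneg_left (by norm_num) (by positivity)
          nlinarith
        linarith
    have hcoef : (1 - α (n+1)) * ρ + α (n+1) = 1 - 2/(s+1) := by
      have h3 : a * (2/(a*(s+1))) = 2/(s+1) := by
        rw [mul_div_assoc']
        exact mul_div_mul_left 2 (s+1) hane
      rw [hα, hs1]
      linear_combination (-1:ℝ) * h3 + (2/(a*(s+1))) * hadef
    have hc0 : (0:ℝ) ≤ 1 - 2/(s+1) := by rw [← hcoef]; nlinarith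
    have hihs : dist (x (n+1)) (x n) ≤ 2*M*(J:ℝ)/(a*s) := ih
    calc dist (x (n+1+1)) (x (n+1))
        ≤ (1 - 2/(s+1)) * dist (x (n+1)) (x n) + (2/(a*s) - 2/(a*(s+1))) * (2*M) := by
          rw [← hcoef, ← hαdiff]; exact htri
      _ ≤ (1 - 2/(s+1)) * (2*M*(J:ℝ)/(a*s)) + (2/(a*s) - 2/(a*(s+1))) * (2*M) := by
          exact add_le_add (mul_le_mul_of_nonneg_left hihs hc0) le_rfl
      _ ≤ 2*M*(J:ℝ)/(a*(s+1)) := by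
          apply key_ineq a s (J:ℝ) M ha hJ2 _ hM
          have : (0:ℝ) ≤ (n:ℝ) := Nat.cast_nonneg n
          rw [hsdef]; linarith
      _ = 2*M*(J:ℝ)/((1-ρ)*(((n+1:ℕ):ℝ)+J)) := by rw [hs1]
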